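/- Let (K,D_K) ⊆ (L,D_L) be an extension of 𝔤-fields, and let C_K and C_L be the fields of constants of K and L respectively (so C_K = C_L ∩ K). Then K and C_L are linearly disjoint over C_K inside L: every finite family of elements of K that is linearly independent over C_K remains linearly independent over C_L when regarded in L. -/

import Mathlib

open scoped TensorProduct

noncomputable section

/-- The ideal `(X₁^pm, …, X_e^pm)` of the polynomial ring `k[X₁,…,X_e]`. -/
def TruncIdeal (k : Type*) [CommRing k] (e pm : ℕ) : Ideal (MvPolynomial (Fin e) k) :=
  Ideal.span (Set.range fun t : Fin e => (MvPolynomial.X t : MvPolynomial (Fin e) k) ^ pm)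

/-- The truncated polynomial algebra `A = k[X₁,…,X_e]/(X₁^pm, …, X_e^pm)`. -/
abbrev TruncAlg (k : Type*) [CommRing k] (e pm : ℕ) :=
  MvPolynomial (Fin e) k ⧸ TruncIdeal k e pm

/-- The image of the monomial `X^i` in the truncated polynomial algebra. -/
def XA (k : Type*) [CommRing k] (e pm : ℕ) (i : Fin e →₀ ℕ) : TruncAlg k e pm :=
  Ideal.Quotient.mk (TruncIdeal k e pm) (MvPolynomial.monomial i (1 : k))

/-- The finite set `[pm]^e` of multi-indices `i` with `i t ≤ pm - 1` for all `t`. -/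
def box (e pm : ℕ) : Finset (Fin e →₀ ℕ) :=
  Finset.Iic (Finsupp.equivFunOnFinite.symm fun _ => pm - 1)

/-- The total degree `|i| = i 1 + … + i e` of a multi-index. -/
def mdeg {e : ℕ} (i : Fin e →₀ ℕ) : ℕ := ∑ t, i t

/-- A `k`-Hopf algebra structure on the truncated polynomial algebra `A`, whose counit is
evaluation at `X = 0`; i.e. a truncated group scheme `𝔤` with underlying scheme `Spec A`. -/
structure TruncHopf (k : Type*) [CommRing k] (e pm : ℕ) where
  /-- the comultiplication `Δ : A → A ⊗[k] A`, a `k`-algebra homomorphism -/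
  comul : TruncAlg k e pm →ₐ[k] TruncAlg k e pm ⊗[k] TruncAlg k e pm
  /-- the counit `ε : A → k` -/
  counit : TruncAlg k e pm →ₐ[k] k
  /-- the counit is evaluation at `X = 0` -/
  counit_monomial : ∀ i : Fin e →₀ ℕ, counit (XA k e pm i) = if i = 0 then 1 else 0
  /-- coassociativity of `Δ` -/
  coassoc : (Algebra.TensorProduct.assoc k k k (TruncAlg k e pm) (TruncAlg k e pm)
        (TruncAlg k e pm)).toAlgHom.comp
        ((Algebra.TensorProduct.map comul (AlgHom.id k (TruncAlg k e pm))).comp comul)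
      = (Algebra.TensorProduct.map (AlgHom.id k (TruncAlg k e pm)) comul).comp comul
  /-- left counit axiom: `(ε ⊗ id) ∘ Δ = id` -/
  counit_comul_left : (Algebra.TensorProduct.lid k (TruncAlg k e pm)).toAlgHom.comp
        ((Algebra.TensorProduct.map counit (AlgHom.id k (TruncAlg k e pm))).comp comul)
      = AlgHom.id k (TruncAlg k e pm)
  /-- right counit axiom: `(id ⊗ ε) ∘ Δ = id` -/
  counit_comul_right : (Algebra.TensorProduct.rid k k (TruncAlg k e pm)).toAlgHom.comp
        ((Algebra.TensorProduct.map (AlgHom.id k (TruncAlg k e pm)) counit).comp comul)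
      = AlgHom.id k (TruncAlg k e pm)
  /-- the antipode `S : A → A` -/
  antipode : TruncAlg k e pm →ₗ[k] TruncAlg k e pm
  /-- left antipode axiom: `m ∘ (S ⊗ id) ∘ Δ = η ∘ ε` -/
  antipode_left : (LinearMap.mul' k (TruncAlg k e pm)).comp
        ((TensorProduct.map antipode LinearMap.id).comp comul.toLinearMap)
      = (Algebra.linearMap k (TruncAlg k e pm)).comp counit.toLinearMap
  /-- right antipode axiom: `m ∘ (id ⊗ S) ∘ Δ = η ∘ ε` -/
  antipode_right : (LinearMap.mul' k (TruncAlg k e pm)).comp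
        ((TensorProduct.map LinearMap.id antipode).comp comul.toLinearMap)
      = (Algebra.linearMap k (TruncAlg k e pm)).comp counit.toLinearMap

/-- An `pm`-truncated `e`-dimensional Hasse–Schmidt derivation on the commutative `k`-algebra
`R`, given by its family of coefficients `D i : R → R` (for multi-indices `i ∈ [pm]^e`):
equivalently, a `k`-algebra homomorphism `R → R ⊗[k] A` (with `A` the truncated polynomial
algebra in `e` variables) which is a section of the projection `R ⊗[k] A → R` killing the
variables. -/
structure TruncHSDer (k R : Type*) [CommRing k] [CommRing R] [Algebra k R] (e pm : ℕ) where
  /-- the coefficient maps `D_i`, each of which is `k`-linear -/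
  D : (Fin e →₀ ℕ) → R →ₗ[k] R
  D_zero : D 0 = LinearMap.id
  D_one : ∀ i : Fin e →₀ ℕ, i ≠ 0 → D i 1 = 0
  D_mul : ∀ i : Fin e →₀ ℕ, (∀ t, i t < pm) → ∀ x y : R,
    D i (x * y) = ∑ q ∈ Finset.HasAntidiagonal.antidiagonal i, D q.1 x * D q.2 y
  D_trunc : ∀ i : Fin e →₀ ℕ, (∃ t, pm ≤ i t) → D i = 0

/-- `D` is a `𝔤`-derivation for the truncated group scheme `𝔤` given by the Hopf algebra `H`:
the associated map `D : R → R ⊗[k] A`, `r ↦ ∑ᵢ Dᵢ(r) ⊗ X^i`, is coassociative, i.e.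
`(D ⊗ id_A) ∘ D = (id_R ⊗ Δ) ∘ D` (so `R` is an `A`-comodule algebra). -/
def IsGDer {k R : Type*} [CommRing k] [CommRing R] [Algebra k R] {e pm : ℕ}
    (H : TruncHopf k e pm) (D : TruncHSDer k R e pm) : Prop :=
  ∀ r : R,
    (TensorProduct.assoc k R (TruncAlg k e pm) (TruncAlg k e pm))
        (∑ i ∈ box e pm,
          (∑ j ∈ box e pm, D.D j (D.D i r) ⊗ₜ[k] XA k e pm j) ⊗ₜ[k] XA k e pm i)
      = ∑ i ∈ box e pm, D.D i r ⊗ₜ[k] H.comul (XA k e pm i)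

/-- `(K, D)` is strict: the ring of constants `⋂_{|i| = 1} ker Dᵢ` coincides with
`K^p = {x^p : x ∈ K}`. -/
def IsStrictT {k K : Type*} [CommRing k] [CommRing K] [Algebra k K] {e pm : ℕ} (p : ℕ)
    (D : TruncHSDer k K e pm) : Prop :=
  ∀ x : K, (∀ i : Fin e →₀ ℕ, mdeg i = 1 → D.D i x = 0) ↔ ∃ y : K, y ^ p = x

section Aux

lemma mdeg_eq_zero_iff {e : ℕ} {i : Fin e →₀ ℕ} : mdeg i = 0 ↔ i = 0 := by
  constructor
  · intro h
    ext t
    exact Finset.sum_eq_zero_iff.mp h t (Finset.mem_univ t)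
  · rintro rfl; simp [mdeg]

lemma ne_zero_of_mdeg_one {e : ℕ} {i : Fin e →₀ ℕ} (h : mdeg i = 1) : i ≠ 0 := by
  rintro rfl
  simp [mdeg] at h

lemma apply_le_mdeg {e : ℕ} (i : Fin e →₀ ℕ) (t : Fin e) : i t ≤ mdeg i :=
  Finset.single_le_sum (fun _ _ => Nat.zero_le _) (Finset.mem_univ t)

lemma antidiagonal_of_mdeg_one {e : ℕ} {i : Fin e →₀ ℕ} (h : mdeg i = 1) :
    Finset.HasAntidiagonal.antidiagonal i = {((0 : Fin e →₀ ℕ), i), (i, (0 : Fin e →₀ ℕ))} := by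
  have hi0 : i ≠ 0 := ne_zero_of_mdeg_one h
  ext q
  simp only [Finset.HasAntidiagonal.mem_antidiagonal, Finset.mem_insert, Finset.mem_singleton]
  constructor
  · intro hq
    have hsum : mdeg q.1 + mdeg q.2 = 1 := by
      rw [← h, ← hq]
      simp [mdeg, Finsupp.add_apply, Finset.sum_add_distrib]
    rcases Nat.eq_zero_or_pos (mdeg q.1) with h1 | h1
    · left
      have hq1 : q.1 = 0 := mdeg_eq_zero_iff.mp h1
      have hq2 : q.2 = i := by rw [← hq, hq1, zero_add]
      exact Prod.ext hq1 hq2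
    · right
      have h2 : mdeg q.2 = 0 := by omega
      have hq2 : q.2 = 0 := mdeg_eq_zero_iff.mp h2
      have hq1 : q.1 = i := by rw [← hq, hq2, add_zero]
      exact Prod.ext hq1 hq2
  · rintro (rfl | rfl) <;> simp
  
lemma leibniz_one {k R : Type*} [CommRing k] [CommRing R] [Algebra k R] {e pm : ℕ}
    (hpm : 2 ≤ pm) (D : TruncHSDer k R e pm) {i : Fin e →₀ ℕ} (hi : mdeg i = 1)
    (x y : R) : D.D i (x * y) = x * D.D i y + D.D i x * y := by
  have hi0 : i ≠ 0 := ne_zero_of_mdeg_one hi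
  have hlt : ∀ t, i t < pm := by
    intro t
    have := apply_le_mdeg i t
    omega
  have hne : ((0 : Fin e →₀ ℕ), i) ≠ (i, (0 : Fin e →₀ ℕ)) := by
    intro h
    exact hi0 ((Prod.mk.injEq _ _ _ _).mp h).1.symm
  rw [D.D_mul i hlt x y, antidiagonal_of_mdeg_one hi, Finset.sum_pair hne]
  simp [D.D_zero]

/-- The subfield of constants of a truncated HS-derivation on a field. -/
def constSubfield {k K : Type*} [CommRing k] [Field K] [Algebra k K] {e pm : ℕ}
    (hpm : 2 ≤ pm) (D : TruncHSDer k K e pm) : Subfield K where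
  carrier := {x | ∀ i : Fin e →₀ ℕ, mdeg i = 1 → D.D i x = 0}
  mul_mem' := by
    intro a b ha hb i hi
    rw [leibniz_one hpm D hi, ha i hi, hb i hi, mul_zero, zero_mul, add_zero]
  one_mem' := fun i hi => D.D_one i (ne_zero_of_mdeg_one hi)
  add_mem' := by
    intro a b ha hb i hi
    rw [map_add, ha i hi, hb i hi, add_zero]
  zero_mem' := fun i hi => map_zero _
  neg_mem' := by
    intro a ha i hi
    rw [map_neg, ha i hi, neg_zero]
  inv_mem' := by
    intro a ha i hi
    rcases eq_or_ne a 0 with rfl | h0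
    · rw [inv_zero, map_zero]
    · have h1 : D.D i (a * a⁻¹) = 0 := by
        rw [mul_inv_cancel₀ h0]
        exact D.D_one i (ne_zero_of_mdeg_one hi)
      rw [leibniz_one hpm D hi, ha i hi, zero_mul, add_zero] at h1
      exact (mul_eq_zero.mp h1).resolve_left h0

lemma mem_constSubfield {k K : Type*} [CommRing k] [Field K] [Algebra k K] {e pm : ℕ}
    {hpm : 2 ≤ pm} {D : TruncHSDer k K e pm} {x : K} :
    x ∈ constSubfield hpm D ↔ ∀ i : Fin e →₀ ℕ, mdeg i = 1 → D.D i x = 0 := Iff.rfl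

open scoped Classical in
/-- Key lemma: if the `c s` are constants of `L` which are linearly independent over the
image of the constants of `K`, then they are linearly independent over (the image of) `K`. -/
lemma key_indep {k K L : Type*} [CommRing k] [Field K] [Field L] [Algebra k K] [Algebra k L]
    [Algebra K L] {e pm : ℕ} (hpm : 2 ≤ pm)
    (DK : TruncHSDer k K e pm) (DL : TruncHSDer k L e pm)
    (hext : ∀ (i : Fin e →₀ ℕ) (x : K), DL.D i (algebraMap K L x) = algebraMap K L (DK.D i x))
    {r : ℕ} (c : Fin r → L)
    (hc : ∀ s, ∀ i : Fin e →₀ ℕ, mdeg i = 1 → DL.D i (c s) = 0)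
    (hcind : ∀ u : Fin r → K, (∀ s, ∀ i : Fin e →₀ ℕ, mdeg i = 1 → DK.D i (u s) = 0) →
      ∑ s, algebraMap K L (u s) * c s = 0 → ∀ s, u s = 0) :
    ∀ (N : ℕ) (a : Fin r → K), (Finset.univ.filter fun s => a s ≠ 0).card ≤ N →
      ∑ s, algebraMap K L (a s) * c s = 0 → ∀ s, a s = 0 := by
  intro N
  induction N with
  | zero =>
    intro a hcard _ s
    by_contra hs
    have hmem : s ∈ Finset.univ.filter fun s => a s ≠ 0 := by
      simp [hs]
    have := Finset.card_pos.mpr ⟨s, hmem⟩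
    omega
  | succ N ih =>
    intro a hcard hrel s0
    by_contra hs0'
    have hmem0 : s0 ∈ Finset.univ.filter fun s => a s ≠ 0 := by simp [hs0']
    set a' : Fin r → K := fun t => a t * (a s0)⁻¹ with ha'
    have ha's0 : a' s0 = 1 := mul_inv_cancel₀ hs0'
    have hrel' : ∑ t, algebraMap K L (a' t) * c t = 0 := by
      have heq : ∑ t, algebraMap K L (a' t) * c t
          = algebraMap K L (a s0)⁻¹ * ∑ t, algebraMap K L (a t) * c t := by
        rw [Finset.mul_sum]
        refine Finset.sum_congr rfl fun t _ => ?_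
        rw [ha', map_mul]
        ring
      rw [heq, hrel, mul_zero]
    have hder : ∀ i : Fin e →₀ ℕ, mdeg i = 1 → ∀ t, DK.D i (a' t) = 0 := by
      intro i hi
      have h2 : ∑ t, DL.D i (algebraMap K L (a' t) * c t) = 0 := by
        rw [← map_sum, hrel', map_zero]
      have h1 : ∑ t, algebraMap K L (DK.D i (a' t)) * c t = 0 := by
        rw [← h2]
        refine Finset.sum_congr rfl fun t _ => ?_
        rw [leibniz_one hpm DL hi, hc t i hi, hext, mul_zero, zero_add]
      refine ih (fun t => DK.D i (a' t)) ?_ h1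
      have hsub : (Finset.univ.filter fun t => DK.D i (a' t) ≠ 0)
          ⊆ (Finset.univ.filter fun t => a t ≠ 0).erase s0 := by
        intro t ht
        simp only [Finset.mem_filter, Finset.mem_univ, true_and] at ht
        rw [Finset.mem_erase]
        constructor
        · intro h
          subst h
          exact ht (by rw [ha's0]; exact DK.D_one i (ne_zero_of_mdeg_one hi))
        · simp only [Finset.mem_filter, Finset.mem_univ, true_and]
          intro h
          apply ht
          rw [ha']
          simp only [h, zero_mul, map_zero]
      calc (Finset.univ.filter fun t => DK.D i (a' t) ≠ 0).card
          ≤ ((Finset.univ.filter fun t => a t ≠ 0).erase s0).card := Finset.card_le_card hsub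
        _ ≤ N := by
            rw [Finset.card_erase_of_mem hmem0]
            omega
    have hall : ∀ t, a' t = 0 := hcind a' (fun t i hi => hder i hi t) hrel'
    rw [hall s0] at ha's0
    exact zero_ne_one ha's0

end Aux

universe u

set_option maxHeartbeats 2000000 in
set_option synthInstance.maxHeartbeats 1000000 in
/-- For an extension `(K, D_K) ⊆ (L, D_L)` of `𝔤`-fields, `K` and the
constants `C_L` of `L` are linearly disjoint over the constants `C_K` of `K` inside `L`:
any finite family of elements of `K` linearly independent over `C_K` stays linearly
independent over `C_L`. -/
theorem constants_linearly_disjoint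
    (p : ℕ) [Fact p.Prime] (e m : ℕ) (he : 0 < e) (hm : 0 < m)
    (k : Type u) [Field k] [CharP k p] [ExpChar k p] [PerfectRing k p]
    (K L : Type u) [Field K] [Field L] [Algebra k K] [Algebra k L]
    [Algebra K L] [IsScalarTower k K L]
    (H : TruncHopf k e (p ^ m))
    (DK : TruncHSDer k K e (p ^ m)) (DL : TruncHSDer k L e (p ^ m))
    (hDK : IsGDer H DK) (hDL : IsGDer H DL)
    (hext : ∀ (i : Fin e →₀ ℕ) (x : K), DL.D i (algebraMap K L x) = algebraMap K L (DK.D i x))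
    (n : ℕ) (x : Fin n → K)
    (hind : ∀ a : Fin n → K,
      (∀ j, ∀ i : Fin e →₀ ℕ, mdeg i = 1 → DK.D i (a j) = 0) →
      ∑ j, a j * x j = 0 → ∀ j, a j = 0) :
    ∀ b : Fin n → L,
      (∀ j, ∀ i : Fin e →₀ ℕ, mdeg i = 1 → DL.D i (b j) = 0) →
      ∑ j, b j * algebraMap K L (x j) = 0 → ∀ j, b j = 0 := by
  classical
  intro b hb hrel
  have hp2 : 2 ≤ p ^ m := by
    have hp : 2 ≤ p := (Fact.out : p.Prime).two_le
    calc 2 ≤ p := hp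
      _ ≤ p ^ m := Nat.le_self_pow hm.ne' p
  set CK : Subfield K := constSubfield hp2 DK with hCKdef
  set F : Subfield L := CK.map (algebraMap K L) with hFdef
  -- elements of `F` are constants of `L`
  have hFconst : ∀ y : L, y ∈ F → ∀ i : Fin e →₀ ℕ, mdeg i = 1 → DL.D i y = 0 := by
    rintro y hy i hi
    rcases Subfield.mem_map.mp hy with ⟨z, hz, rfl⟩
    rw [hext, hz i hi, map_zero]
  set W : Submodule F L := Submodule.span F (Set.range b) with hWdef
  have hfd : FiniteDimensional F W := FiniteDimensional.span_of_finite F (Set.finite_range b)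
  set r := Module.finrank F W with hrdef
  set B : Module.Basis (Fin r) F W := Module.finBasis F W with hBdef
  set c : Fin r → L := fun s => (B s : L) with hcdef
  -- every element of `W` is a constant of `L`
  have hWconst : ∀ y ∈ W, ∀ i : Fin e →₀ ℕ, mdeg i = 1 → DL.D i y = 0 := by
    intro y hy
    induction hy using Submodule.span_induction with
    | mem z hz =>
      rcases hz with ⟨j, rfl⟩
      exact hb j
    | zero => intro i hi; rw [map_zero]
    | add z w _ _ hz hw => intro i hi; rw [map_add, hz i hi, hw i hi, add_zero]
    | smul g z _ hz =>
      intro i hi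
      have hgz : (g : L) * z = g • z := rfl
      rw [← hgz, leibniz_one hp2 DL hi, hz i hi, hFconst (g : L) g.2 i hi, mul_zero,
        zero_mul, add_zero]
  have hc : ∀ s, ∀ i : Fin e →₀ ℕ, mdeg i = 1 → DL.D i (c s) = 0 :=
    fun s => hWconst (c s) (B s).2
  have hbW : ∀ j, b j ∈ W := fun j => Submodule.subset_span ⟨j, rfl⟩
  set mc : Fin n → Fin r → F := fun j s => B.repr ⟨b j, hbW j⟩ s with hmcdef
  have hbsum : ∀ j, b j = ∑ s, (mc j s : L) * c s := by
    intro j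
    conv_lhs => rw [show b j = ((⟨b j, hbW j⟩ : W) : L) from rfl, ← B.sum_repr ⟨b j, hbW j⟩]
    rw [show ((∑ s, B.repr ⟨b j, hbW j⟩ s • B s : W) : L)
        = W.subtype (∑ s, B.repr ⟨b j, hbW j⟩ s • B s) from rfl, map_sum]
    rfl
  -- choose preimages in `K` of the coordinates
  have hmex : ∀ j s, ∃ z : K, z ∈ CK ∧ algebraMap K L z = (mc j s : L) := fun j s =>
    Subfield.mem_map.mp (mc j s).2
  choose u hu1 hu2 using hmex
  -- the `c s` are linearly independent over the constants of `K`
  have hcind : ∀ v : Fin r → K, (∀ s, ∀ i : Fin e →₀ ℕ, mdeg i = 1 → DK.D i (v s) = 0) →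
      ∑ s, algebraMap K L (v s) * c s = 0 → ∀ s, v s = 0 := by
    intro v hv hvrel s
    set g : Fin r → F := fun s => ⟨algebraMap K L (v s),
      Subfield.mem_map.mpr ⟨v s, hv s, rfl⟩⟩ with hgdef
    have hsum0 : ∑ s, g s • B s = 0 := by
      apply Subtype.ext
      rw [show ((∑ s, g s • B s : W) : L) = W.subtype (∑ s, g s • B s) from rfl, map_sum]
      exact hvrel
    have hg0 : ∀ s, g s = 0 :=
      Fintype.linearIndependent_iff.mp B.linearIndependent g hsum0
    have : algebraMap K L (v s) = 0 := congrArg Subtype.val (hg0 s)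
    exact (map_eq_zero (algebraMap K L)).mp this
  -- the combined relation
  have hrel2 : ∑ s, algebraMap K L (∑ j, u j s * x j) * c s = 0 := by
    calc ∑ s, algebraMap K L (∑ j, u j s * x j) * c s
        = ∑ s, ∑ j, ((mc j s : L) * c s) * algebraMap K L (x j) := by
          refine Finset.sum_congr rfl fun s _ => ?_
          rw [map_sum, Finset.sum_mul]
          refine Finset.sum_congr rfl fun j _ => ?_
          rw [map_mul, hu2 j s]
          ring
      _ = ∑ j, (∑ s, (mc j s : L) * c s) * algebraMap K L (x j) := by
          rw [Finset.sum_comm]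
          refine Finset.sum_congr rfl fun j _ => ?_
          rw [Finset.sum_mul]
      _ = ∑ j, b j * algebraMap K L (x j) := by
          refine Finset.sum_congr rfl fun j _ => ?_
          rw [← hbsum j]
      _ = 0 := hrel
  -- apply the key lemma
  have hzero : ∀ s, (∑ j, u j s * x j) = 0 := by
    refine key_indep hp2 DK DL hext c hc hcind r _ ?_ hrel2
    calc (Finset.univ.filter fun s => (∑ j, u j s * x j) ≠ 0).card
        ≤ Finset.univ.card := Finset.card_filter_le _ _
      _ = r := by simp
  -- conclude via the independence hypothesis over `C_K`
  have hu0 : ∀ s j, u j s = 0 := fun s => hind (fun j => u j s) (fun j => hu1 j s) (hzero s)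
  intro j
  rw [hbsum j]
  refine Finset.sum_eq_zero fun s _ => ?_
  have : (mc j s : L) = 0 := by rw [← hu2 j s, hu0 s j, map_zero]
  rw [this, zero_mul]
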